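/- In a game of Toggle starting from the position P_{0,1}(m,2) on the generalized Petersen graph P(m,2) (m ≥ 5), every vertex v that is unplayable at some reachable position is terminally unplayable at that position. -/

import Mathlib

namespace Toggle

variable {V : Type*} [Fintype V] [DecidableEq V]

/-- The closed neighborhood `N[v]` of a vertex as a `Finset`. -/
def closedNbhd (G : SimpleGraph V) [DecidableRel G.Adj] (v : V) : Finset V :=
  insert v (G.neighborFinset v)

/-- The result of a Toggle move at `v`: flip the weight of every vertex in `N[v]`. -/
def move (G : SimpleGraph V) [DecidableRel G.Adj] (ω : V → Bool) (v : V) : V → Bool :=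
  fun u => if u ∈ closedNbhd G v then !(ω u) else ω u

/-- Total weight of a position. -/
def weight (ω : V → Bool) : ℕ := (Finset.univ.filter (fun u => ω u = true)).card

/-- Weight of a position over the closed neighborhood of `v`. -/
def nbhdWeight (G : SimpleGraph V) [DecidableRel G.Adj] (ω : V → Bool) (v : V) : ℕ :=
  ((closedNbhd G v).filter (fun u => ω u = true)).card

/-- A Toggle move at `v` is legal iff `ω v = 1` and the move strictly decreases the
weight over `N[v]`. -/
def IsLegal (G : SimpleGraph V) [DecidableRel G.Adj] (ω : V → Bool) (v : V) : Prop :=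
  ω v = true ∧ nbhdWeight G (move G ω v) v < nbhdWeight G ω v

instance (G : SimpleGraph V) [DecidableRel G.Adj] (ω : V → Bool) (v : V) :
    Decidable (IsLegal G ω v) :=
  inferInstanceAs (Decidable (ω v = true ∧ nbhdWeight G (move G ω v) v < nbhdWeight G ω v))

theorem weight_move_lt (G : SimpleGraph V) [DecidableRel G.Adj] {ω : V → Bool} {v : V}
    (h : IsLegal G ω v) : weight (move G ω v) < weight ω := by
  have key : ∀ ψ : V → Bool,
      weight ψ = ((closedNbhd G v).filter (fun u => ψ u = true)).card
        + ((Finset.univ \ closedNbhd G v).filter (fun u => ψ u = true)).card := by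
    intro ψ
    rw [weight, ← Finset.card_union_of_disjoint
      (Finset.disjoint_filter_filter Finset.disjoint_sdiff)]
    congr 1
    ext u
    simp only [Finset.mem_filter, Finset.mem_union, Finset.mem_sdiff, Finset.mem_univ,
      true_and]
    tauto
  have hout : ((Finset.univ \ closedNbhd G v).filter (fun u => move G ω v u = true))
      = ((Finset.univ \ closedNbhd G v).filter (fun u => ω u = true)) := by
    apply Finset.filter_congr
    intro u hu
    rw [Finset.mem_sdiff] at hu
    simp [move, hu.2]
  have h2 := h.2
  rw [key (move G ω v), key ω, hout]
  unfold nbhdWeight at h2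
  omega

/-- Minimal excludant of a finite set of naturals. -/
noncomputable def mex (s : Finset ℕ) : ℕ := sInf {n : ℕ | n ∉ s}

/-- The Nimber (Grundy value) of a Toggle position. -/
noncomputable def grundy (G : SimpleGraph V) [DecidableRel G.Adj] (ω : V → Bool) : ℕ :=
  mex ((Finset.univ.filter (fun v => IsLegal G ω v)).attach.image
    (fun v => grundy G (move G ω v.1)))
termination_by weight ω
decreasing_by
  have hv := v.2
  rw [Finset.mem_filter] at hv
  exact weight_move_lt G hv.2

/-- One legal Toggle move transforms `ω` into `ω'`. -/
def Step (G : SimpleGraph V) [DecidableRel G.Adj] (ω ω' : V → Bool) : Prop :=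
  ∃ v, IsLegal G ω v ∧ ω' = move G ω v

/-- `ω'` is reachable from `ω` by a (possibly empty) sequence of legal moves. -/
def Reach (G : SimpleGraph V) [DecidableRel G.Adj] (ω ω' : V → Bool) : Prop :=
  Relation.ReflTransGen (Step G) ω ω'

/-- `v` is terminally unplayable at `ω`: unplayable at `ω` and at every position
reachable from `ω`. -/
def TerminallyUnplayable (G : SimpleGraph V) [DecidableRel G.Adj] (ω : V → Bool) (v : V) :
    Prop :=
  ∀ ω', Reach G ω ω' → ¬ IsLegal G ω' v

/-- `v` is penultimately unplayable for the initial position `ω₀`: at every position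
reachable from `ω₀`, after any legal move at a vertex `u ∈ N[v]`, the vertex `v` is
terminally unplayable. -/
def PenultimatelyUnplayableAt (G : SimpleGraph V) [DecidableRel G.Adj] (ω₀ : V → Bool)
    (v : V) : Prop :=
  ∀ ω', Reach G ω₀ ω' → ∀ u ∈ closedNbhd G v, IsLegal G ω' u →
    TerminallyUnplayable G (move G ω' u) v

/-- The position `ω₀` is penultimately unplayable if every vertex is. -/
def PenultimatelyUnplayable (G : SimpleGraph V) [DecidableRel G.Adj] (ω₀ : V → Bool) :
    Prop :=
  ∀ v, PenultimatelyUnplayableAt G ω₀ v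

/-- The path graph on `Fin n`, vertices `0, 1, …, n-1` in order. -/
def pathGraph (n : ℕ) : SimpleGraph (Fin n) :=
  SimpleGraph.fromRel (fun a b => (a : ℕ) + 1 = (b : ℕ))

instance (n : ℕ) : DecidableRel (pathGraph n).Adj := fun a b =>
  decidable_of_iff _ (SimpleGraph.fromRel_adj _ a b).symm

/-- The 2×m grid graph `L_{2,m}` (0-indexed rows and columns). -/
def gridGraph (m : ℕ) : SimpleGraph (Fin 2 × Fin m) :=
  SimpleGraph.fromRel (fun a b =>
    (a.1 = b.1 ∧ (a.2 : ℕ) + 1 = (b.2 : ℕ)) ∨ (a.2 = b.2 ∧ (a.1 : ℕ) + 1 = (b.1 : ℕ)))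

instance (m : ℕ) : DecidableRel (gridGraph m).Adj := fun a b =>
  decidable_of_iff _ (SimpleGraph.fromRel_adj _ a b).symm

/-- The generalized Petersen graph `P(m,k)`; the vertex `(0, i)` is the outer vertex
`u_i` and `(1, i)` is the inner vertex `w_i` (0-indexed). -/
def petersen (m k : ℕ) : SimpleGraph (Fin 2 × Fin m) :=
  SimpleGraph.fromRel (fun a b =>
    (a.1 = 0 ∧ b.1 = 0 ∧ ((a.2 : ℕ) + 1) % m = (b.2 : ℕ)) ∨
    (a.1 = 0 ∧ b.1 = 1 ∧ a.2 = b.2) ∨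
    (a.1 = 1 ∧ b.1 = 1 ∧ ((a.2 : ℕ) + k) % m = (b.2 : ℕ)))

instance (m k : ℕ) : DecidableRel (petersen m k).Adj := fun a b =>
  decidable_of_iff _ (SimpleGraph.fromRel_adj _ a b).symm

/-- The position on `P(m,k)` where every outer vertex has weight 1 and every inner
vertex has weight 0. -/
def P01 (m : ℕ) : Fin 2 × Fin m → Bool := fun p => decide (p.1 = 0)

/-- The position on `P(m,k)` where every inner vertex has weight 1 and every outer
vertex has weight 0. -/
def P10 (m : ℕ) : Fin 2 × Fin m → Bool := fun p => decide (p.1 = 1)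

/-- The position where every vertex has weight 1. -/
def P11 (m : ℕ) : Fin 2 × Fin m → Bool := fun _ => true

/-- The Toggle position `H_m` on `L_{2,m}` (columns 0-indexed): for `m ≠ 3`, weight 0
exactly at `(0,0), (0,m-1), (1,0), (1,1), (1,m-2), (1,m-1)`; for `m = 3`, weight 0
exactly at `(0,0), (0,2), (1,0), (1,2)`. -/
def Hpos (m : ℕ) : Fin 2 × Fin m → Bool := fun p =>
  if m = 3 then !(decide ((p.2 : ℕ) = 0 ∨ (p.2 : ℕ) = 2))
  else !(decide ((p.1 = 0 ∧ ((p.2 : ℕ) = 0 ∨ (p.2 : ℕ) = m - 1)) ∨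
                 (p.1 = 1 ∧ ((p.2 : ℕ) ≤ 1 ∨ m - 2 ≤ (p.2 : ℕ)))))

/-- The Toggle position `D_m` on `L_{2,m}` (columns 0-indexed): weight 0 exactly at
`(0,0), (0,m-2), (0,m-1), (1,0), (1,1), (1,m-1)`. -/
def Dpos (m : ℕ) : Fin 2 × Fin m → Bool := fun p =>
  !(decide ((p.1 = 0 ∧ ((p.2 : ℕ) = 0 ∨ m - 2 ≤ (p.2 : ℕ))) ∨
            (p.1 = 1 ∧ ((p.2 : ℕ) ≤ 1 ∨ (p.2 : ℕ) = m - 1))))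

/-- The Nimber of the position `H_m`. -/
noncomputable def GH (m : ℕ) : ℕ := grundy (gridGraph m) (Hpos m)

/-- The Nimber of the position `D_m`. -/
noncomputable def GD (m : ℕ) : ℕ := grundy (gridGraph m) (Dpos m)

/-- The cycle graph `C_m` on `Fin m`. -/
def cycleGraph (m : ℕ) : SimpleGraph (Fin m) :=
  SimpleGraph.fromRel (fun a b => ((a : ℕ) + 1) % m = (b : ℕ))

open scoped Classical in
/-- The Nimber of a position of Jacob's Ladder on `C_m`: a position is the `Finset` of
not-yet-removed vertices, and a move at a remaining vertex `v` removes all remaining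
vertices at distance at most 2 from `v` in `C_m`. -/
noncomputable def jlGrundy (m : ℕ) (S : Finset (Fin m)) : ℕ :=
  mex (S.attach.image (fun v =>
    jlGrundy m (S.filter (fun u => 2 < (cycleGraph m).dist v.1 u))))
termination_by S.card
decreasing_by
  apply Finset.card_lt_card
  rw [Finset.ssubset_iff_of_subset (Finset.filter_subset _ _)]
  exact ⟨v.1, v.2, by simp [SimpleGraph.dist_self]⟩


section S16

variable {m : ℕ} [NeZero m]

open Fin.CommRing

lemma val_one5 (hm : 5 ≤ m) : ((1 : Fin m) : ℕ) = 1 := by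
  have := Fin.val_cast_of_lt (n := m) (a := 1) (by omega)
  rw [← this]; norm_cast

lemma val_two5 (hm : 5 ≤ m) : ((2 : Fin m) : ℕ) = 2 := by
  have := Fin.val_cast_of_lt (n := m) (a := 2) (by omega)
  rw [← this]; norm_cast

lemma one_ne_zero5 (hm : 5 ≤ m) : (1 : Fin m) ≠ 0 := by
  simp [Fin.ext_iff, val_one5 hm]; omega

lemma two_ne_zero5 (hm : 5 ≤ m) : (2 : Fin m) ≠ 0 := by
  simp [Fin.ext_iff, val_two5 hm]
  rw [Nat.mod_eq_of_lt (by omega)]; omega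

lemma add1_iff (hm : 5 ≤ m) (a b : Fin m) : ((a:ℕ) + 1) % m = (b:ℕ) ↔ b = a + 1 := by
  rw [Fin.ext_iff, Fin.val_add, val_one5 hm, eq_comm]

lemma add2_iff (hm : 5 ≤ m) (a b : Fin m) : ((a:ℕ) + 2) % m = (b:ℕ) ↔ b = a + 2 := by
  rw [Fin.ext_iff, Fin.val_add, val_two5 hm, eq_comm]

lemma adj_outer (hm : 5 ≤ m) (j : Fin m) (b : Fin 2 × Fin m) :
    (petersen m 2).Adj (0, j) b ↔ b = (0, j+1) ∨ b = (0, j-1) ∨ b = (1, j) := by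
  obtain ⟨b1, b2⟩ := b
  rw [petersen, SimpleGraph.fromRel_adj]
  have h1 := one_ne_zero5 hm
  have ne1 : j + 1 ≠ j := fun h => h1 (by exact add_eq_left.mp h)
  have ne2 : j - 1 ≠ j := fun h => h1 (by exact sub_eq_self.mp h)
  have e : (j = b2 + 1) ↔ (b2 = j - 1) := by
    constructor <;> intro h <;> subst h <;> ring
  simp only [ne_eq, Prod.mk.injEq, add1_iff hm, show ((0:Fin 2) = 1) = False by simp,
    show ((1:Fin 2) = 0) = False by simp [Fin.ext_iff], e, true_and, false_and, and_false,
    or_false]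
  constructor
  · rintro ⟨hne, (⟨rfl, rfl⟩ | ⟨rfl, h⟩) | ⟨rfl, rfl⟩⟩
    · exact Or.inl ⟨rfl, rfl⟩
    · exact Or.inr (Or.inr ⟨rfl, h.symm⟩)
    · exact Or.inr (Or.inl ⟨rfl, rfl⟩)
  · rintro (⟨rfl, rfl⟩ | ⟨rfl, rfl⟩ | ⟨rfl, rfl⟩)
    · exact ⟨fun h => ne1 h.2.symm, Or.inl (Or.inl ⟨rfl, rfl⟩)⟩
    · exact ⟨fun h => ne2 h.2.symm, Or.inr ⟨rfl, rfl⟩⟩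
    · exact ⟨fun h => absurd h.1 (by decide), Or.inl (Or.inr ⟨rfl, rfl⟩)⟩

lemma adj_inner (hm : 5 ≤ m) (i : Fin m) (b : Fin 2 × Fin m) :
    (petersen m 2).Adj (1, i) b ↔ b = (1, i+2) ∨ b = (1, i-2) ∨ b = (0, i) := by
  obtain ⟨b1, b2⟩ := b
  rw [petersen, SimpleGraph.fromRel_adj]
  have h2 := two_ne_zero5 hm
  have ne1 : i + 2 ≠ i := fun h => h2 (by exact add_eq_left.mp h)
  have ne2 : i - 2 ≠ i := fun h => h2 (by exact sub_eq_self.mp h)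
  have e : (i = b2 + 2) ↔ (b2 = i - 2) := by
    constructor <;> intro h <;> subst h <;> ring
  simp only [ne_eq, Prod.mk.injEq, add2_iff hm, show ((0:Fin 2) = 1) = False by simp,
    show ((1:Fin 2) = 0) = False by simp [Fin.ext_iff], e, true_and, false_and, and_false,
    or_false, false_or, and_true]
  constructor
  · rintro ⟨hne, h⟩
    tauto
  · rintro (⟨rfl, rfl⟩ | ⟨rfl, rfl⟩ | ⟨rfl, rfl⟩)
    · exact ⟨fun h => ne1 h.2.symm, by tauto⟩
    · exact ⟨fun h => ne2 h.2.symm, by tauto⟩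
    · exact ⟨fun h => absurd h.1 (by decide), by tauto⟩

lemma cn_outer (hm : 5 ≤ m) (j : Fin m) :
    closedNbhd (petersen m 2) (0, j) = {(0,j), (0,j+1), (0,j-1), (1,j)} := by
  ext b
  rw [closedNbhd, Finset.mem_insert, SimpleGraph.mem_neighborFinset, adj_outer hm]
  simp only [Finset.mem_insert, Finset.mem_singleton]

lemma cn_inner (hm : 5 ≤ m) (i : Fin m) :
    closedNbhd (petersen m 2) (1, i) = {(1,i), (1,i+2), (1,i-2), (0,i)} := by
  ext b
  rw [closedNbhd, Finset.mem_insert, SimpleGraph.mem_neighborFinset, adj_inner hm]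
  simp only [Finset.mem_insert, Finset.mem_singleton]

lemma card_filter_four {α : Type*} [DecidableEq α] (p : α → Bool) (a b c d : α)
    (hab : a ≠ b) (hac : a ≠ c) (had : a ≠ d) (hbc : b ≠ c) (hbd : b ≠ d) (hcd : c ≠ d) :
    (({a,b,c,d} : Finset α).filter (fun x => p x = true)).card =
      (if p a = true then 1 else 0) + ((if p b = true then 1 else 0) +
        ((if p c = true then 1 else 0) + (if p d = true then 1 else 0))) := by
  rw [Finset.card_filter, Finset.sum_insert (by simp [hab, hac, had]),
    Finset.sum_insert (by simp [hbc, hbd]), Finset.sum_insert (by simp [hcd]),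
    Finset.sum_singleton]

lemma outer_distinct (hm : 5 ≤ m) (j : Fin m) :
    ((0:Fin 2),j) ≠ (0,j+1) ∧ ((0:Fin 2),j) ≠ (0,j-1) ∧ ((0:Fin 2),j) ≠ (1,j) ∧
    ((0:Fin 2),j+1) ≠ (0,j-1) ∧ ((0:Fin 2),j+1) ≠ (1,j) ∧ ((0:Fin 2),j-1) ≠ (1,j) := by
  have h1 := one_ne_zero5 hm
  have h2 := two_ne_zero5 hm
  have ne1 : j ≠ j + 1 := fun h => h1 (by exact (add_eq_left.mp h.symm))
  have ne2 : j ≠ j - 1 := fun h => h1 (by exact (sub_eq_self.mp h.symm))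
  have ne3 : j + 1 ≠ j - 1 := by
    intro h
    apply h2
    have : j + 2 = j := by
      calc j + 2 = (j + 1) + 1 := by ring
        _ = (j - 1) + 1 := by rw [h]
        _ = j := by ring
    exact add_eq_left.mp this
  refine ⟨by simp [Prod.ext_iff, ne1], by simp [Prod.ext_iff, ne2], by simp [Prod.ext_iff],
    by simp [Prod.ext_iff, ne3], by simp [Prod.ext_iff], by simp [Prod.ext_iff]⟩

lemma inner_distinct (hm : 5 ≤ m) (i : Fin m) :
    ((1:Fin 2),i) ≠ (1,i+2) ∧ ((1:Fin 2),i) ≠ (1,i-2) ∧ ((1:Fin 2),i) ≠ (0,i) ∧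
    ((1:Fin 2),i+2) ≠ (1,i-2) ∧ ((1:Fin 2),i+2) ≠ (0,i) ∧ ((1:Fin 2),i-2) ≠ (0,i) := by
  have h2 := two_ne_zero5 hm
  have h4 : (2:Fin m) + 2 ≠ 0 := by
    have : (((2:Fin m) + 2 : Fin m) : ℕ) = 4 := by
      rw [Fin.val_add, val_two5 hm, Nat.mod_eq_of_lt (by omega)]
    simp [Fin.ext_iff, this]
  have ne1 : i ≠ i + 2 := fun h => h2 (by exact (add_eq_left.mp h.symm))
  have ne2 : i ≠ i - 2 := fun h => h2 (by exact (sub_eq_self.mp h.symm))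
  have ne3 : i + 2 ≠ i - 2 := by
    intro h
    apply h4
    have : i + (2 + 2) = i := by
      calc i + (2 + 2) = (i + 2) + 2 := by ring
        _ = (i - 2) + 2 := by rw [h]
        _ = i := by ring
    exact add_eq_left.mp this
  refine ⟨by simp [Prod.ext_iff, ne1], by simp [Prod.ext_iff, ne2],
    by simp [Prod.ext_iff, Fin.ext_iff], by simp [Prod.ext_iff, ne3],
    by simp [Prod.ext_iff, Fin.ext_iff], by simp [Prod.ext_iff, Fin.ext_iff]⟩

lemma nbhdWeight_outer (hm : 5 ≤ m) (ω : Fin 2 × Fin m → Bool) (j : Fin m) :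
    nbhdWeight (petersen m 2) ω (0, j) =
      (if ω (0,j) = true then 1 else 0) + ((if ω (0,j+1) = true then 1 else 0) +
        ((if ω (0,j-1) = true then 1 else 0) + (if ω (1,j) = true then 1 else 0))) := by
  obtain ⟨d1, d2, d3, d4, d5, d6⟩ := outer_distinct hm j
  rw [nbhdWeight, cn_outer hm, card_filter_four ω _ _ _ _ d1 d2 d3 d4 d5 d6]

lemma nbhdWeight_inner (hm : 5 ≤ m) (ω : Fin 2 × Fin m → Bool) (i : Fin m) :
    nbhdWeight (petersen m 2) ω (1, i) =
      (if ω (1,i) = true then 1 else 0) + ((if ω (1,i+2) = true then 1 else 0) +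
        ((if ω (1,i-2) = true then 1 else 0) + (if ω (0,i) = true then 1 else 0))) := by
  obtain ⟨d1, d2, d3, d4, d5, d6⟩ := inner_distinct hm i
  rw [nbhdWeight, cn_inner hm, card_filter_four ω _ _ _ _ d1 d2 d3 d4 d5 d6]

lemma move_o_o (hm : 5 ≤ m) (ω : Fin 2 × Fin m → Bool) (k x : Fin m) :
    move (petersen m 2) ω (0,k) (0,x) =
      if x = k ∨ x = k+1 ∨ x = k-1 then !ω (0,x) else ω (0,x) := by
  rw [move]
  have hmem : ((0:Fin 2),x) ∈ closedNbhd (petersen m 2) (0,k) ↔ (x = k ∨ x = k+1 ∨ x = k-1) := by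
    rw [cn_outer hm]
    simp [Prod.ext_iff]
  by_cases h : x = k ∨ x = k+1 ∨ x = k-1
  · rw [if_pos (hmem.mpr h), if_pos h]
  · rw [if_neg (fun hx => h (hmem.mp hx)), if_neg h]

lemma move_o_i (hm : 5 ≤ m) (ω : Fin 2 × Fin m → Bool) (k x : Fin m) :
    move (petersen m 2) ω (0,k) (1,x) = if x = k then !ω (1,x) else ω (1,x) := by
  rw [move]
  have hmem : ((1:Fin 2),x) ∈ closedNbhd (petersen m 2) (0,k) ↔ x = k := by
    rw [cn_outer hm]
    simp [Prod.ext_iff, Fin.ext_iff]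
  by_cases h : x = k
  · rw [if_pos (hmem.mpr h), if_pos h]
  · rw [if_neg (fun hx => h (hmem.mp hx)), if_neg h]

lemma move_i_i (hm : 5 ≤ m) (ω : Fin 2 × Fin m → Bool) (k x : Fin m) :
    move (petersen m 2) ω (1,k) (1,x) =
      if x = k ∨ x = k+2 ∨ x = k-2 then !ω (1,x) else ω (1,x) := by
  rw [move]
  have hmem : ((1:Fin 2),x) ∈ closedNbhd (petersen m 2) (1,k) ↔ (x = k ∨ x = k+2 ∨ x = k-2) := by
    rw [cn_inner hm]
    simp [Prod.ext_iff, Fin.ext_iff]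
  by_cases h : x = k ∨ x = k+2 ∨ x = k-2
  · rw [if_pos (hmem.mpr h), if_pos h]
  · rw [if_neg (fun hx => h (hmem.mp hx)), if_neg h]

lemma move_i_o (hm : 5 ≤ m) (ω : Fin 2 × Fin m → Bool) (k x : Fin m) :
    move (petersen m 2) ω (1,k) (0,x) = if x = k then !ω (0,x) else ω (0,x) := by
  rw [move]
  have hmem : ((0:Fin 2),x) ∈ closedNbhd (petersen m 2) (1,k) ↔ x = k := by
    rw [cn_inner hm]
    simp [Prod.ext_iff, Fin.ext_iff]
  by_cases h : x = k
  · rw [if_pos (hmem.mpr h), if_pos h]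
  · rw [if_neg (fun hx => h (hmem.mp hx)), if_neg h]

/-- Invariant for Statement 16. -/
def Inv16 (ω : Fin 2 × Fin m → Bool) : Prop :=
  (∀ i : Fin m, ω (1, i) = true → ω (1, i+1) = false ∧ ω (1, i+2) = false) ∧
  (∀ j : Fin m, ω (0, j) = !(ω (1, j-1) || ω (1, j) || ω (1, j+1)))

lemma inv16_init : Inv16 (m := m) (P01 m) := by
  constructor
  · intro i hi
    simp [P01] at hi
  · intro j
    simp [P01]

lemma inner_not_legal (hm : 5 ≤ m) {ω : Fin 2 × Fin m → Bool} (hI : Inv16 ω) (i : Fin m) :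
    ¬ IsLegal (petersen m 2) ω (1, i) := by
  rintro ⟨h1, hlt⟩
  have ha : ω (1, i+2) = false := (hI.1 i h1).2
  have hb : ω (1, i-2) = false := by
    cases hc : ω (1, i-2)
    · rfl
    · have h := (hI.1 (i-2) hc).2
      rw [sub_add_cancel, h1] at h
      exact absurd h (by simp)
  have hc : ω (0, i) = false := by
    have h := hI.2 i
    rw [h1] at h
    simpa using h
  rw [nbhdWeight_inner hm, nbhdWeight_inner hm] at hlt
  simp [move_i_i hm, move_i_o hm, h1, ha, hb, hc] at hlt

lemma inner_zeros_of_outer (hm : 5 ≤ m) {ω : Fin 2 × Fin m → Bool} (hI : Inv16 ω)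
    {j : Fin m} (hj : ω (0, j) = true) :
    ω (1, j-1) = false ∧ ω (1, j) = false ∧ ω (1, j+1) = false := by
  have h := hI.2 j
  rw [hj] at h
  have h2 : (ω (1, j-1) = false ∧ ω (1, j) = false) ∧ ω (1, j+1) = false := by
    simpa using h.symm
  exact ⟨h2.1.1, h2.1.2, h2.2⟩

lemma legal_outer_iff (hm : 5 ≤ m) {ω : Fin 2 × Fin m → Bool} (hI : Inv16 ω) (j : Fin m) :
    IsLegal (petersen m 2) ω (0, j) ↔
      ω (0, j-1) = true ∧ ω (0, j) = true ∧ ω (0, j+1) = true := by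
  constructor
  · rintro ⟨h1, hlt⟩
    obtain ⟨e1, e2, e3⟩ := inner_zeros_of_outer hm hI h1
    rw [nbhdWeight_outer hm, nbhdWeight_outer hm] at hlt
    simp only [move_o_o hm, move_o_i hm] at hlt
    cases hA : ω (0, j+1) <;> cases hB : ω (0, j-1) <;>
      simp [h1, e2, hA, hB] at hlt <;> exact ⟨rfl, h1, rfl⟩
  · rintro ⟨hA, hB, hC⟩
    obtain ⟨e1, e2, e3⟩ := inner_zeros_of_outer hm hI hB
    refine ⟨hB, ?_⟩
    rw [nbhdWeight_outer hm, nbhdWeight_outer hm]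
    simp [move_o_o hm, move_o_i hm, hA, hB, hC, e2]

lemma step_keep (hm : 5 ≤ m) {ω ω' : Fin 2 × Fin m → Bool} (hI : Inv16 ω)
    (hs : Step (petersen m 2) ω ω') :
    Inv16 ω' ∧ ∀ i, ω (1, i) = true → ω' (1, i) = true := by
  obtain ⟨⟨a, k⟩, hleg, rfl⟩ := hs
  have h01 : a = 0 ∨ a = 1 := by
    rcases a with ⟨av, hav⟩
    interval_cases av
    · exact Or.inl rfl
    · exact Or.inr rfl
  rcases h01 with rfl | rfl
  · -- move at an outer vertex (0,k)
    obtain ⟨hB, h1, hA⟩ := (legal_outer_iff hm hI k).mp hleg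
    obtain ⟨z1, z2, z3⟩ := inner_zeros_of_outer hm hI h1
    obtain ⟨z4, -, -⟩ := inner_zeros_of_outer hm hI hB
    obtain ⟨-, -, z5⟩ := inner_zeros_of_outer hm hI hA
    have z4' : ω (1, k-2) = false := by rw [show k-2 = (k-1)-1 by ring]; exact z4
    have z5' : ω (1, k+2) = false := by rw [show k+2 = (k+1)+1 by ring]; exact z5
    have key : ∀ y : Fin m, ω (1, y) = true →
        (y ≠ k-2 ∧ y ≠ k-1 ∧ y ≠ k ∧ y ≠ k+1 ∧ y ≠ k+2) := by
      intro y hy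
      refine ⟨?_, ?_, ?_, ?_, ?_⟩ <;> rintro rfl <;> simp_all
    have hmono : ∀ i, ω (1, i) = true → move (petersen m 2) ω (0, k) (1, i) = true := by
      intro i hi
      rw [move_o_i hm, if_neg (key i hi).2.2.1]
      exact hi
    refine ⟨⟨?_, ?_⟩, hmono⟩
    · intro i hi
      rw [move_o_i hm] at hi
      rw [move_o_i hm, move_o_i hm]
      by_cases hik : i = k
      · rcases hik with rfl
        have nk1 : i + 1 ≠ i := fun h => one_ne_zero5 hm (add_eq_left.mp h)
        have nk2 : i + 2 ≠ i := fun h => two_ne_zero5 hm (add_eq_left.mp h)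
        rw [if_neg nk1, if_neg nk2]
        exact ⟨z3, z5'⟩
      · rw [if_neg hik] at hi
        obtain ⟨c2, c1, c0, c3, c4⟩ := key i hi
        have h1' : i + 1 ≠ k := fun h => c1 (by rw [← h]; ring)
        have h2' : i + 2 ≠ k := fun h => c2 (by rw [← h]; ring)
        rw [if_neg h1', if_neg h2']
        exact hI.1 i hi
    · intro x
      rw [move_o_o hm, move_o_i hm, move_o_i hm, move_o_i hm]
      by_cases hx : x = k ∨ x = k+1 ∨ x = k-1
      · rw [if_pos hx]
        have hox : ω (0, x) = true := by rcases hx with rfl|rfl|rfl; exacts [h1, hA, hB]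
        rw [hox]
        rcases hx with rfl|rfl|rfl
        · simp [z2]
        · simp [show k + 1 - 1 = k from by ring, z2]
        · simp [show k - 1 + 1 = k from by ring, z2]
      · rw [if_neg hx]
        push_neg at hx
        obtain ⟨n0, n1, n2⟩ := hx
        have s1 : x - 1 ≠ k := fun h => n1 (by rw [← h]; ring)
        have s3 : x + 1 ≠ k := fun h => n2 (by rw [← h]; ring)
        rw [if_neg s1, if_neg n0, if_neg s3]
        exact hI.2 x
  · exact absurd hleg (inner_not_legal hm hI k)

lemma reach_keep (hm : 5 ≤ m) {ω ω' : Fin 2 × Fin m → Bool} (hI : Inv16 ω)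
    (hr : Reach (petersen m 2) ω ω') :
    Inv16 ω' ∧ ∀ i, ω (1, i) = true → ω' (1, i) = true := by
  induction hr with
  | refl => exact ⟨hI, fun _ h => h⟩
  | tail hab hbc ih =>
      obtain ⟨hI', hmono⟩ := ih
      obtain ⟨hI'', hmono'⟩ := step_keep hm hI' hbc
      exact ⟨hI'', fun i hi => hmono' i (hmono i hi)⟩

lemma outer_false_keep (hm : 5 ≤ m) {ω ω' : Fin 2 × Fin m → Bool} (hI : Inv16 ω)
    (hr : Reach (petersen m 2) ω ω') (x : Fin m) (hx : ω (0, x) = false) :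
    ω' (0, x) = false := by
  obtain ⟨hI', hmono⟩ := reach_keep hm hI hr
  have hE : ω (1, x-1) = true ∨ ω (1, x) = true ∨ ω (1, x+1) = true := by
    have h := hI.2 x
    rw [hx] at h
    have h2 := h.symm
    simp only [Bool.not_eq_false', Bool.or_eq_true] at h2
    tauto
  rw [hI'.2 x]
  rcases hE with h' | h' | h' <;> simp [hmono _ h']

end S16

end Toggle

/-- in a game of Toggle on `P(m,2)` (`m ≥ 5`) starting from
`P_{0,1}(m,2)`, every vertex that is unplayable at some reachable position is
terminally unplayable at that position. -/
theorem statement16 (m : ℕ) (hm : 5 ≤ m)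
    (ω : Fin 2 × Fin m → Bool)
    (hr : Toggle.Reach (Toggle.petersen m 2) (Toggle.P01 m) ω)
    (v : Fin 2 × Fin m) (hv : ¬ Toggle.IsLegal (Toggle.petersen m 2) ω v) :
    Toggle.TerminallyUnplayable (Toggle.petersen m 2) ω v := by
  haveI : NeZero m := ⟨by omega⟩
  have hI : Toggle.Inv16 ω := (Toggle.reach_keep hm Toggle.inv16_init hr).1
  intro ω' hr'
  obtain ⟨hI', -⟩ := Toggle.reach_keep hm hI hr'
  obtain ⟨a, x⟩ := v
  have h01 : a = 0 ∨ a = 1 := by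
    rcases a with ⟨av, hav⟩
    interval_cases av
    · exact Or.inl rfl
    · exact Or.inr rfl
  rcases h01 with rfl | rfl
  · have hb : ω (0, x-1) = false ∨ ω (0, x) = false ∨ ω (0, x+1) = false := by
      by_contra hc
      push_neg at hc
      apply hv
      rw [Toggle.legal_outer_iff hm hI]
      exact ⟨Bool.ne_false_iff.mp hc.1, Bool.ne_false_iff.mp hc.2.1,
        Bool.ne_false_iff.mp hc.2.2⟩
    rw [Toggle.legal_outer_iff hm hI']
    rintro ⟨e1, e2, e3⟩
    rcases hb with h | h | h
    · rw [Toggle.outer_false_keep hm hI hr' _ h] at e1; cases e1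
    · rw [Toggle.outer_false_keep hm hI hr' _ h] at e2; cases e2
    · rw [Toggle.outer_false_keep hm hI hr' _ h] at e3; cases e3
  · exact Toggle.inner_not_legal hm hI' x
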